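/- Let A be a positive definite n×n complex matrix and X an n×n complex matrix. Then at least one of the following holds: (1) for every Hermitian B with B ≥ X* A⁻¹ X, ||[[A, X], [X*, B]]|| ≤ ||A + B||; or (2) for every Hermitian C with C ≥ X A⁻¹ X*, ||[[A, X*], [X, C]]|| ≤ ||A + C||. -/

import Mathlib

open scoped Matrix ComplexOrder

/-- The operator norm (largest singular value) of a square complex matrix. -/
noncomputable def opNorm {m : Type*} [Fintype m] [DecidableEq m] (M : Matrix m m ℂ) : ℝ :=
  ‖Matrix.toEuclideanCLM (𝕜 := ℂ) M‖

section helpers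

variable {m : Type*} [Fintype m] [DecidableEq m]

private lemma clm_nonneg_of_psd {M : Matrix m m ℂ} (hM : M.PosSemidef) :
    0 ≤ Matrix.toEuclideanCLM (𝕜 := ℂ) M := by
  obtain ⟨B, rfl⟩ : ∃ B : Matrix m m ℂ, M = star B * B := by
    open scoped MatrixOrder Matrix.Norms.L2Operator in
    exact CStarAlgebra.nonneg_iff_eq_star_mul_self.mp hM.nonneg
  rw [map_mul, map_star]
  exact star_mul_self_nonneg _

private lemma psd_of_clm_nonneg {M : Matrix m m ℂ}
    (h : 0 ≤ Matrix.toEuclideanCLM (𝕜 := ℂ) M) : M.PosSemidef := by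
  rw [StarOrderedRing.nonneg_iff] at h
  have key : ∀ T ∈ AddSubmonoid.closure
      (Set.range fun s : EuclideanSpace ℂ m →L[ℂ] EuclideanSpace ℂ m => star s * s),
      ((Matrix.toEuclideanCLM (𝕜 := ℂ) (n := m)).symm T).PosSemidef := by
    intro T hT
    induction hT using AddSubmonoid.closure_induction with
    | mem t ht =>
      obtain ⟨s, rfl⟩ := ht
      rw [map_mul, show (Matrix.toEuclideanCLM (𝕜 := ℂ) (n := m)).symm (star s)
        = star ((Matrix.toEuclideanCLM (𝕜 := ℂ) (n := m)).symm s) from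
        (Matrix.toEuclideanCLM (𝕜 := ℂ) (n := m)).symm.map_star' s, Matrix.star_eq_conjTranspose]
      exact Matrix.posSemidef_conjTranspose_mul_self _
    | zero => simpa using Matrix.PosSemidef.zero
    | add f g _ _ hf hg => rw [map_add]; exact hf.add hg
  simpa using key _ h

private lemma opNorm_le_iff_psd {M : Matrix m m ℂ} (hM : M.PosSemidef) {r : ℝ} (hr : 0 ≤ r) :
    opNorm M ≤ r ↔ ((r : ℂ) • (1 : Matrix m m ℂ) - M).PosSemidef := by
  have h0 := clm_nonneg_of_psd hM
  have halg : algebraMap ℝ (EuclideanSpace ℂ m →L[ℂ] EuclideanSpace ℂ m) r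
      = Matrix.toEuclideanCLM (𝕜 := ℂ) ((r : ℂ) • 1) := by
    rw [map_smul, map_one, IsScalarTower.algebraMap_apply ℝ ℂ
      (EuclideanSpace ℂ m →L[ℂ] EuclideanSpace ℂ m), Algebra.algebraMap_eq_smul_one]
    rfl
  rw [show opNorm M = ‖Matrix.toEuclideanCLM (𝕜 := ℂ) M‖ from rfl,
    CStarAlgebra.norm_le_iff_le_algebraMap _ hr h0, halg, ← sub_nonneg, ← map_sub]
  exact ⟨psd_of_clm_nonneg, clm_nonneg_of_psd⟩

private lemma opNorm_nonneg' (M : Matrix m m ℂ) : 0 ≤ opNorm M := norm_nonneg _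

private lemma psd_smul_one_sub {M : Matrix m m ℂ} (hM : M.PosSemidef) :
    ((opNorm M : ℂ) • (1 : Matrix m m ℂ) - M).PosSemidef :=
  (opNorm_le_iff_psd hM (opNorm_nonneg' M)).mp le_rfl

private lemma opNorm_mono {P Q : Matrix m m ℂ} (hP : P.PosSemidef)
    (hPQ : (Q - P).PosSemidef) : opNorm P ≤ opNorm Q := by
  have hQ : Q.PosSemidef := by simpa using hPQ.add hP
  rw [opNorm_le_iff_psd hP (opNorm_nonneg' Q)]
  have h1 := (psd_smul_one_sub hQ).add hPQ
  have : (opNorm Q : ℂ) • (1 : Matrix m m ℂ) - Q + (Q - P)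
      = (opNorm Q : ℂ) • (1 : Matrix m m ℂ) - P := by abel
  rwa [this] at h1

private lemma posDef_smul_one {n : ℕ} {ε : ℝ} (hε : 0 < ε) :
    ((ε : ℂ) • (1 : Matrix (Fin n) (Fin n) ℂ)).PosDef := by
  exact Matrix.PosDef.one.smul (by exact_mod_cast hε)

private lemma main_side {n : ℕ} (A X : Matrix (Fin n) (Fin n) ℂ) (hA : A.PosDef)
    (hcmp : opNorm (A + X * A⁻¹ * Xᴴ) ≤ opNorm (A + Xᴴ * A⁻¹ * X)) :
    ∀ B : Matrix (Fin n) (Fin n) ℂ, B.IsHermitian → (B - Xᴴ * A⁻¹ * X).PosSemidef →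
      opNorm (Matrix.fromBlocks A X Xᴴ B) ≤ opNorm (A + B) := by
  intro B hBh hBX
  haveI := hA.isUnit.invertible
  have hAinv : (A⁻¹).PosSemidef := hA.inv.posSemidef
  have hXAX : (Xᴴ * A⁻¹ * X).PosSemidef := hAinv.conjTranspose_mul_mul_same X
  have hXAXH : (X * A⁻¹ * Xᴴ).PosSemidef := hAinv.mul_mul_conjTranspose_same X
  have hB : B.PosSemidef := by simpa using hBX.add hXAX
  have hAB : (A + B).PosSemidef := (hA.add_posSemidef hB).posSemidef
  set t := opNorm (A + B) with ht
  have ht0 : 0 ≤ t := opNorm_nonneg' _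
  have hABle : ((t : ℂ) • (1 : Matrix (Fin n) (Fin n) ℂ) - (A + B)).PosSemidef :=
    psd_smul_one_sub hAB
  have ht1 : opNorm (A + Xᴴ * A⁻¹ * X) ≤ t := by
    refine opNorm_mono (hA.add_posSemidef hXAX).posSemidef ?_
    have : A + B - (A + Xᴴ * A⁻¹ * X) = B - Xᴴ * A⁻¹ * X := by abel
    rwa [this]
  have ht2 : opNorm (A + X * A⁻¹ * Xᴴ) ≤ t := hcmp.trans ht1
  have hC : ((t : ℂ) • (1 : Matrix (Fin n) (Fin n) ℂ) - (A + X * A⁻¹ * Xᴴ)).PosSemidef :=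
    (opNorm_le_iff_psd (hA.add_posSemidef hXAXH).posSemidef ht0).mp ht2
  have hM : (Matrix.fromBlocks A X Xᴴ B).PosSemidef :=
    (Matrix.PosDef.fromBlocks₁₁ X B hA).mpr hBX
  refine le_of_forall_pos_le_add fun ε hε => ?_
  have hs0 : 0 ≤ t + ε := by positivity
  have hεI : ((ε : ℂ) • (1 : Matrix (Fin n) (Fin n) ℂ)).PosDef := posDef_smul_one hε
  have hsplit : ((t + ε : ℝ) : ℂ) • (1 : Matrix (Fin n) (Fin n) ℂ)
      = (t : ℂ) • (1 : Matrix (Fin n) (Fin n) ℂ) + (ε : ℂ) • (1 : Matrix (Fin n) (Fin n) ℂ) := by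
    rw [Complex.ofReal_add, add_smul]
  have hA' : (((t + ε : ℝ) : ℂ) • (1 : Matrix (Fin n) (Fin n) ℂ) - A).PosDef := by
    have h1 : ((t + ε : ℝ) : ℂ) • (1 : Matrix (Fin n) (Fin n) ℂ) - A
        = ((t : ℂ) • (1 : Matrix (Fin n) (Fin n) ℂ) - (A + B) + B)
          + (ε : ℂ) • (1 : Matrix (Fin n) (Fin n) ℂ) := by
      rw [hsplit]; abel
    rw [h1]
    exact Matrix.PosDef.posSemidef_add (hABle.add hB) hεI
  haveI := hA'.isUnit.invertible
  have hN : (Matrix.fromBlocks (((t + ε : ℝ) : ℂ) • (1 : Matrix (Fin n) (Fin n) ℂ) - A)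
      X Xᴴ A).PosSemidef := by
    rw [Matrix.PosDef.fromBlocks₂₂ _ X hA]
    have h2 : ((t + ε : ℝ) : ℂ) • (1 : Matrix (Fin n) (Fin n) ℂ) - A - X * A⁻¹ * Xᴴ
        = ((t : ℂ) • (1 : Matrix (Fin n) (Fin n) ℂ) - (A + X * A⁻¹ * Xᴴ))
          + (ε : ℂ) • (1 : Matrix (Fin n) (Fin n) ℂ) := by
      rw [hsplit]; abel
    rw [h2]
    exact hC.add hεI.posSemidef
  have hSchur : (A - Xᴴ * (((t + ε : ℝ) : ℂ) • (1 : Matrix (Fin n) (Fin n) ℂ) - A)⁻¹ * X).PosSemidef :=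
    (Matrix.PosDef.fromBlocks₁₁ X A hA').mp hN
  rw [opNorm_le_iff_psd hM hs0]
  have hblock : ((t + ε : ℝ) : ℂ) • (1 : Matrix (Fin n ⊕ Fin n) (Fin n ⊕ Fin n) ℂ)
      - Matrix.fromBlocks A X Xᴴ B
      = Matrix.fromBlocks (((t + ε : ℝ) : ℂ) • (1 : Matrix (Fin n) (Fin n) ℂ) - A) (-X)
        ((-X)ᴴ) (((t + ε : ℝ) : ℂ) • (1 : Matrix (Fin n) (Fin n) ℂ) - B) := by
    rw [Matrix.conjTranspose_neg, ← Matrix.fromBlocks_one, Matrix.fromBlocks_smul]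
    ext i j
    rcases i with i | i <;> rcases j with j | j <;>
      simp [Matrix.sub_apply]
  rw [hblock]
  rw [Matrix.PosDef.fromBlocks₁₁ (-X) _ hA']
  have h3 : ((t + ε : ℝ) : ℂ) • (1 : Matrix (Fin n) (Fin n) ℂ) - B
      - (-X)ᴴ * (((t + ε : ℝ) : ℂ) • (1 : Matrix (Fin n) (Fin n) ℂ) - A)⁻¹ * (-X)
      = (((t : ℂ) • (1 : Matrix (Fin n) (Fin n) ℂ) - (A + B))
          + (ε : ℂ) • (1 : Matrix (Fin n) (Fin n) ℂ))
        + (A - Xᴴ * (((t + ε : ℝ) : ℂ) • (1 : Matrix (Fin n) (Fin n) ℂ) - A)⁻¹ * X) := by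
    simp only [Matrix.conjTranspose_neg, Matrix.neg_mul, Matrix.mul_neg, neg_neg]
    rw [hsplit]; abel
  rw [h3]
  exact (hABle.add hεI.posSemidef).add hSchur

end helpers

theorem stmt_5 {n : ℕ} (A X : Matrix (Fin n) (Fin n) ℂ) (hA : A.PosDef) :
    (∀ B : Matrix (Fin n) (Fin n) ℂ, B.IsHermitian → (B - Xᴴ * A⁻¹ * X).PosSemidef →
      opNorm (Matrix.fromBlocks A X Xᴴ B) ≤ opNorm (A + B)) ∨
    (∀ C : Matrix (Fin n) (Fin n) ℂ, C.IsHermitian → (C - X * A⁻¹ * Xᴴ).PosSemidef →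
      opNorm (Matrix.fromBlocks A Xᴴ X C) ≤ opNorm (A + C)) := by
  rcases le_total (opNorm (A + X * A⁻¹ * Xᴴ)) (opNorm (A + Xᴴ * A⁻¹ * X)) with h | h
  · exact Or.inl (main_side A X hA h)
  · right
    have h' : opNorm (A + Xᴴ * A⁻¹ * (Xᴴ)ᴴ) ≤ opNorm (A + (Xᴴ)ᴴ * A⁻¹ * Xᴴ) := by
      rwa [Matrix.conjTranspose_conjTranspose]
    have := main_side A Xᴴ hA h'
    rwa [Matrix.conjTranspose_conjTranspose] at this
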